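/- (Lemma 2 of the paper.) Let DB be an uncertain database all of whose existential probabilities are nonnegative. Then for every nonempty pattern α, expSup^cap(α) ≤ expSupport^top(α); that is, the upper bound expSup^cap used by FUWS is always at most the upper bound expSupport^top used by uWSequence. -/

import Mathlib

variable {I : Type*}

/-- An uncertain sequence: a finite list of (item, existential probability) pairs. -/
abbrev USeq (I : Type*) := List (I × ℝ)

/-- An uncertain database: a finite list of uncertain sequences. -/
abbrev UDB (I : Type*) := List (USeq I)

/-- `α` occurs in `S`: some sublist of `S` has item list `α`. -/
def Occurs (α : List I) (S : USeq I) : Prop :=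
  ∃ o : USeq I, o.Sublist S ∧ o.map Prod.fst = α

/-- Maximum occurrence probability of pattern `α` in `S`
(`0` if `α` has no occurrence in `S`; `1` for the empty pattern). -/
noncomputable def maxPrS [DecidableEq I] (α : List I) (S : USeq I) : ℝ :=
  (((S.sublists.filter fun o => decide (o.map Prod.fst = α)).map
      fun o => (o.map Prod.snd).prod).maximum).getD 0

/-- Greedy projection: `projSeq α S = some S'` iff `α` occurs in `S`, in which case `S'`
is the suffix of `S` strictly after the last matched position of the greedy (leftmost)
occurrence of `α` in `S`.  For the empty pattern it is `S` itself. -/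
def projSeq [DecidableEq I] : List I → USeq I → Option (USeq I)
  | [], S => some S
  | _ :: _, [] => none
  | i :: α, (x, _) :: rest =>
      if x = i then projSeq α rest else projSeq (i :: α) rest

/-- The projected database `DB|α`. -/
def projDB [DecidableEq I] (α : List I) (DB : UDB I) : UDB I :=
  DB.filterMap (projSeq α)

/-- `P̂_D(i)`: maximum probability of an entry with item `i` over all sequences of `D`
(`0` if `i` occurs in no sequence of `D`). -/
noncomputable def Phat [DecidableEq I] (D : UDB I) (i : I) : ℝ :=
  (((D.flatten.filter fun e => decide (e.1 = i)).map Prod.snd).maximum).getD 0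

/-- `maxPr(α)` relative to `DB`: the product of per-step maximum probabilities over the
successively projected databases. -/
noncomputable def maxPrDB [DecidableEq I] (DB : UDB I) (α : List I) : ℝ :=
  ∏ k : Fin α.length, Phat (projDB (α.take k.val) DB) (α.get k)

/-- Expected support of `α` in `DB`. -/
noncomputable def expSup [DecidableEq I] (DB : UDB I) (α : List I) : ℝ :=
  (DB.map fun S => maxPrS α S).sum

/-- `expSup^cap` of a nonempty pattern (junk value `0` on the empty pattern). -/
noncomputable def expSupCap [DecidableEq I] (DB : UDB I) (α : List I) : ℝ :=
  match α.getLast? with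
  | none => 0
  | some i =>
      maxPrDB DB α.dropLast *
        ((projDB α.dropLast DB).map fun S' => maxPrS [i] S').sum

/-- Number of sequences of `D` in which item `i` occurs. -/
def supCount [DecidableEq I] (D : UDB I) (i : I) : ℕ :=
  (D.filter fun S => decide (i ∈ S.map Prod.fst)).length

/-- `expSupport^top` of a nonempty pattern (junk value `0` on the empty pattern). -/
noncomputable def expSupTop [DecidableEq I] (DB : UDB I) (α : List I) : ℝ :=
  match α.getLast? with
  | none => 0
  | some i =>
      maxPrDB DB α.dropLast * Phat (projDB α.dropLast DB) i *
        (supCount (projDB α.dropLast DB) i : ℝ)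

/-- Item `i` occurs in some sequence of `D`. -/
def ItemOccursIn (D : UDB I) (i : I) : Prop :=
  ∃ S ∈ D, i ∈ S.map Prod.fst

/-- `sWeight`: average weight of the items of a pattern. -/
noncomputable def sWeight (w : I → ℝ) (α : List I) : ℝ :=
  (α.map w).sum / (α.length : ℝ)

/-- Maximum weight among the items of a pattern (`0` for the empty pattern). -/
noncomputable def mxWs (w : I → ℝ) (α : List I) : ℝ :=
  ((α.map w).maximum).getD 0

/-- Maximum weight among items occurring in some sequence of `D` (`0` if none). -/
noncomputable def mxWDB (w : I → ℝ) (D : UDB I) : ℝ :=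
  ((D.flatten.map fun e => w e.1).maximum).getD 0

/-- `wgt^cap`. -/
noncomputable def wgtCap [DecidableEq I] (DB : UDB I) (w : I → ℝ) (α : List I) : ℝ :=
  max (mxWDB w (projDB α.dropLast DB)) (mxWs w α)

/-- Weighted expected support. -/
noncomputable def WES [DecidableEq I] (DB : UDB I) (w : I → ℝ) (α : List I) : ℝ :=
  expSup DB α * sWeight w α

/-- `wExpSup^cap`. -/
noncomputable def wExpSupCap [DecidableEq I] (DB : UDB I) (w : I → ℝ) (α : List I) : ℝ :=
  expSupCap DB α * wgtCap DB w α

-- Auxiliary lemmas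

lemma unbot'_max_le {L : List ℝ} {b : ℝ} (hb : 0 ≤ b) (h : ∀ x ∈ L, x ≤ b) :
    (L.maximum).getD 0 ≤ b := by
  cases hL : L.maximum with
  | bot => exact hb
  | coe m => exact h m (List.maximum_mem hL)

lemma unbot'_max_nonneg {L : List ℝ} (h : ∀ x ∈ L, 0 ≤ x) :
    0 ≤ (L.maximum).getD 0 := by
  cases hL : L.maximum with
  | bot => exact le_rfl
  | coe m => exact h m (List.maximum_mem hL)

lemma projSeq_sublist [DecidableEq I] : ∀ (α : List I) (S S' : USeq I),
    projSeq α S = some S' → S'.Sublist S := by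
  intro α
  induction α with
  | nil =>
    intro S S' h
    simp only [projSeq, Option.some.injEq] at h
    simp [h]
  | cons i α ih =>
    intro S
    induction S with
    | nil => intro S' h; simp [projSeq] at h
    | cons e rest ihS =>
      intro S' h
      obtain ⟨x, p⟩ := e
      simp only [projSeq] at h
      split at h
      · exact (ih rest S' h).trans (List.sublist_cons_self _ _)
      · exact (ihS S' h).trans (List.sublist_cons_self _ _)

lemma Phat_nonneg [DecidableEq I] {D : UDB I} (hD : ∀ e ∈ D.flatten, 0 ≤ e.2) (i : I) :
    0 ≤ Phat D i := by
  apply unbot'_max_nonneg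
  intro x hx
  simp only [List.mem_map, List.mem_filter] at hx
  obtain ⟨e, ⟨he, _⟩, rfl⟩ := hx
  exact hD e he

lemma le_Phat [DecidableEq I] {D : UDB I} {e : I × ℝ} (he : e ∈ D.flatten) (i : I)
    (hi : e.1 = i) : e.2 ≤ Phat D i := by
  have hmem : e.2 ∈ ((D.flatten.filter fun e => decide (e.1 = i)).map Prod.snd) := by
    simp only [List.mem_map, List.mem_filter]
    exact ⟨e, ⟨he, by simp [hi]⟩, rfl⟩
  cases hL : ((D.flatten.filter fun e => decide (e.1 = i)).map Prod.snd).maximum with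
  | bot =>
    rw [List.maximum_eq_bot.mp hL] at hmem
    exact absurd hmem List.not_mem_nil
  | coe m =>
    have h1 := List.le_maximum_of_mem hmem hL
    unfold Phat
    rw [hL]
    exact h1

lemma maxPrS_single_le [DecidableEq I] {S : USeq I} {i : I} {b : ℝ} (hb : 0 ≤ b)
    (h : ∀ e ∈ S, e.1 = i → e.2 ≤ b) : maxPrS [i] S ≤ b := by
  apply unbot'_max_le hb
  intro x hx
  simp only [List.mem_map, List.mem_filter, List.mem_sublists, decide_eq_true_eq] at hx
  obtain ⟨o, ⟨hsub, hmap⟩, rfl⟩ := hx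
  match o, hmap with
  | [e], hmap =>
    simp only [List.map_cons, List.map_nil, List.cons.injEq] at hmap
    simp only [List.map_cons, List.map_nil, List.prod_cons, List.prod_nil, mul_one]
    exact h e (hsub.subset (by simp)) hmap.1

lemma maxPrS_single_zero [DecidableEq I] {S : USeq I} {i : I}
    (h : i ∉ S.map Prod.fst) : maxPrS [i] S = 0 := by
  have : (S.sublists.filter fun o => decide (o.map Prod.fst = [i])) = [] := by
    rw [List.filter_eq_nil_iff]
    intro o ho
    simp only [List.mem_sublists] at ho
    simp only [decide_eq_true_eq]
    intro hmap
    apply h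
    have : i ∈ o.map Prod.fst := by simp [hmap]
    exact (ho.map Prod.fst).subset this
  simp [maxPrS, this]
  rfl

lemma sum_maxPrS_le [DecidableEq I] (b : ℝ) (hb : 0 ≤ b) (i : I) :
    ∀ D : UDB I, (∀ S ∈ D, ∀ e ∈ S, e.1 = i → e.2 ≤ b) →
    (D.map fun S' => maxPrS [i] S').sum ≤ b * supCount D i := by
  intro D
  induction D with
  | nil => intro _; simp [supCount]
  | cons S D ih =>
    intro h
    have hD := ih fun S' hS' => h S' (List.mem_cons_of_mem _ hS')
    simp only [List.map_cons, List.sum_cons]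
    by_cases hi : i ∈ S.map Prod.fst
    · have hc : supCount (S :: D) i = supCount D i + 1 := by
        simp [supCount, hi]
      rw [hc]
      push_cast
      have h1 : maxPrS [i] S ≤ b := maxPrS_single_le hb (h S (by simp))
      linarith
    · have hc : supCount (S :: D) i = supCount D i := by
        simp [supCount, hi]
      rw [hc, maxPrS_single_zero hi]
      linarith

lemma projDB_entries_nonneg [DecidableEq I] {DB : UDB I}
    (hp : ∀ S ∈ DB, ∀ e ∈ S, 0 ≤ e.2) (β : List I) :
    ∀ e ∈ (projDB β DB).flatten, 0 ≤ e.2 := by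
  intro e he
  rw [List.mem_flatten] at he
  obtain ⟨S', hS', heS'⟩ := he
  simp only [projDB, List.mem_filterMap] at hS'
  obtain ⟨S, hS, hproj⟩ := hS'
  exact hp S hS e ((projSeq_sublist β S S' hproj).subset heS')

lemma maxPrDB_nonneg [DecidableEq I] {DB : UDB I}
    (hp : ∀ S ∈ DB, ∀ e ∈ S, 0 ≤ e.2) (β : List I) :
    0 ≤ maxPrDB DB β :=
  Finset.prod_nonneg fun _ _ => Phat_nonneg (projDB_entries_nonneg hp _) _

/-- Lemma 2: if all probabilities of `DB` are nonnegative, then for every nonempty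
pattern `α`, `expSup^cap(α) ≤ expSupport^top(α)`. -/
theorem expSupCap_le_expSupTop [DecidableEq I]
    (DB : UDB I) (hp : ∀ S ∈ DB, ∀ e ∈ S, 0 ≤ e.2)
    (α : List I) (hα : α ≠ []) :
    expSupCap DB α ≤ expSupTop DB α := by
  have hlast : α.getLast? = some (α.getLast hα) := List.getLast?_eq_getLast hα
  set i := α.getLast hα
  simp only [expSupCap, expSupTop, hlast]
  set D := projDB α.dropLast DB with hD
  have hnn : ∀ e ∈ D.flatten, 0 ≤ e.2 := projDB_entries_nonneg hp α.dropLast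
  have hb : 0 ≤ Phat D i := Phat_nonneg hnn i
  have hsum : (D.map fun S' => maxPrS [i] S').sum ≤ Phat D i * supCount D i :=
    sum_maxPrS_le (Phat D i) hb i D
      (fun S hS e heS hei => le_Phat (List.mem_flatten.mpr ⟨S, hS, heS⟩) i hei)
  have hm : 0 ≤ maxPrDB DB α.dropLast := maxPrDB_nonneg hp _
  calc maxPrDB DB α.dropLast * (D.map fun S' => maxPrS [i] S').sum
      ≤ maxPrDB DB α.dropLast * (Phat D i * supCount D i) :=
        mul_le_mul_of_nonneg_left hsum hm
    _ = maxPrDB DB α.dropLast * Phat D i * supCount D i := by ring
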